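/- Let M be an n×n complex matrix (n ≥ 2), let k < ℓ be indices in {0,…,n−1}, and suppose rows k and ℓ of M each have squared Euclidean norm at most 1. Let A be a 2×2 complex unitary matrix and let M' be the matrix obtained from M by replacing row k with A(1,1)·(row k of M) + A(1,2)·(row ℓ of M) and row ℓ with A(2,1)·(row k of M) + A(2,2)·(row ℓ of M), all other rows unchanged. Then Φ(M') ≤ Φ(M) + 2. -/

import Mathlib

open Matrix

/-- The matrix entropy Φ(M) = −∑_{p,q} |M(p,q)|²·log₂ |M(p,q)|². -/
noncomputable def matrixEntropy {n : ℕ} (M : Matrix (Fin n) (Fin n) ℂ) : ℝ :=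
  -∑ p, ∑ q, ‖M p q‖ ^ 2 * Real.logb 2 (‖M p q‖ ^ 2)

section Aux

open Real

lemma negMulLog_add_le_aux {a b : ℝ} (ha : 0 ≤ a) (hb : 0 ≤ b) :
    Real.negMulLog (a + b) ≤ Real.negMulLog a + Real.negMulLog b := by
  simp only [Real.negMulLog, neg_mul]
  have h1 : a * Real.log a ≤ a * Real.log (a + b) := by
    rcases eq_or_lt_of_le ha with h | h
    · simp [← h]
    · exact mul_le_mul_of_nonneg_left (Real.log_le_log h (by linarith)) ha
  have h2 : b * Real.log b ≤ b * Real.log (a + b) := by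
    rcases eq_or_lt_of_le hb with h | h
    · simp [← h]
    · exact mul_le_mul_of_nonneg_left (Real.log_le_log h (by linarith)) hb
  have h3 : (a + b) * Real.log (a + b) = a * Real.log (a + b) + b * Real.log (a + b) := by ring
  linarith

lemma two_negMulLog_half {s : ℝ} (hs : 0 ≤ s) :
    2 * Real.negMulLog (s / 2) = Real.negMulLog s + s * Real.log 2 := by
  rcases eq_or_lt_of_le hs with h | h
  · simp [← h]
  · simp only [Real.negMulLog, neg_mul]
    rw [Real.log_div (ne_of_gt h) two_ne_zero]
    ring

lemma negMulLog_pair_key {a b a' b' : ℝ} (ha : 0 ≤ a) (hb : 0 ≤ b)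
    (ha' : 0 ≤ a') (hb' : 0 ≤ b') (hsum : a' + b' = a + b) :
    Real.negMulLog a' + Real.negMulLog b' ≤
      Real.negMulLog a + Real.negMulLog b + (a + b) * Real.log 2 := by
  have hc := Real.concaveOn_negMulLog.2 (Set.mem_Ici.2 ha') (Set.mem_Ici.2 hb')
      (by norm_num : (0:ℝ) ≤ 1/2) (by norm_num : (0:ℝ) ≤ 1/2) (by norm_num : (1:ℝ)/2 + 1/2 = 1)
  simp only [smul_eq_mul] at hc
  have heq : 1 / 2 * a' + 1 / 2 * b' = (a + b) / 2 := by linarith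
  rw [heq] at hc
  have h2 := two_negMulLog_half (by linarith : (0:ℝ) ≤ a + b)
  have h3 := negMulLog_add_le_aux ha hb
  linarith

lemma normSq_pair_eq {a b c d x y : ℂ}
    (h1 : starRingEnd ℂ a * a + starRingEnd ℂ c * c = 1)
    (h2 : starRingEnd ℂ a * b + starRingEnd ℂ c * d = 0)
    (h3 : starRingEnd ℂ b * a + starRingEnd ℂ d * c = 0)
    (h4 : starRingEnd ℂ b * b + starRingEnd ℂ d * d = 1) :
    Complex.normSq (a * x + b * y) + Complex.normSq (c * x + d * y) =
      Complex.normSq x + Complex.normSq y := by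
  have key : ((Complex.normSq (a * x + b * y) : ℂ) + (Complex.normSq (c * x + d * y) : ℂ)) =
      (Complex.normSq x : ℂ) + (Complex.normSq y : ℂ) := by
    simp only [Complex.normSq_eq_conj_mul_self]
    simp only [map_add, _root_.map_mul]
    linear_combination (starRingEnd ℂ x * x) * h1 + (starRingEnd ℂ x * y) * h2 +
      (starRingEnd ℂ y * x) * h3 + (starRingEnd ℂ y * y) * h4
  exact_mod_cast key

end Aux

theorem matrixEntropy_step {n : ℕ} (hn : 2 ≤ n) (M : Matrix (Fin n) (Fin n) ℂ)
    (k l : Fin n) (hkl : k < l)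
    (hrowk : ∑ q, ‖M k q‖ ^ 2 ≤ 1)
    (hrowl : ∑ q, ‖M l q‖ ^ 2 ≤ 1)
    (A : Matrix (Fin 2) (Fin 2) ℂ) (hA : Aᴴ * A = 1)
    (M' : Matrix (Fin n) (Fin n) ℂ)
    (hM' : M' = fun p q =>
      if p = k then A 0 0 * M k q + A 0 1 * M l q
      else if p = l then A 1 0 * M k q + A 1 1 * M l q
      else M p q) :
    matrixEntropy M' ≤ matrixEntropy M + 2 := by
  have hlog2 : 0 < Real.log 2 := Real.log_pos one_lt_two
  -- rewrite entropy in terms of negMulLog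
  have hrw : ∀ (N : Matrix (Fin n) (Fin n) ℂ),
      matrixEntropy N * Real.log 2 =
        ∑ p, ∑ q, Real.negMulLog (‖N p q‖ ^ 2) := by
    intro N
    unfold matrixEntropy
    rw [neg_mul, Finset.sum_mul, ← Finset.sum_neg_distrib]
    refine Finset.sum_congr rfl fun p _ => ?_
    rw [Finset.sum_mul, ← Finset.sum_neg_distrib]
    refine Finset.sum_congr rfl fun q _ => ?_
    rw [Real.negMulLog, Real.logb]
    field_simp
  -- entry relations from unitarity
  have hA' : ∀ i j : Fin 2, starRingEnd ℂ (A 0 i) * A 0 j + starRingEnd ℂ (A 1 i) * A 1 j =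
      if i = j then 1 else 0 := by
    intro i j
    have h := congrFun (congrFun hA i) j
    simpa [Matrix.mul_apply, Matrix.one_apply, Matrix.conjTranspose_apply,
      Fin.sum_univ_two] using h
  have hkl' : k ≠ l := ne_of_lt hkl
  -- values of M' on rows k and l
  have hMk : ∀ q, M' k q = A 0 0 * M k q + A 0 1 * M l q := by
    intro q; rw [hM']; simp
  have hMl : ∀ q, M' l q = A 1 0 * M k q + A 1 1 * M l q := by
    intro q; rw [hM']; simp [hkl'.symm]
  -- per column: sum of squares preserved
  have hcol : ∀ q, ‖M' k q‖ ^ 2 + ‖M' l q‖ ^ 2 =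
      ‖M k q‖ ^ 2 + ‖M l q‖ ^ 2 := by
    intro q
    rw [hMk q, hMl q]
    simp only [Complex.sq_norm]
    exact normSq_pair_eq (hA' 0 0) (hA' 0 1) (hA' 1 0) (hA' 1 1)
  -- per column entropy bound
  have hcolE : ∀ q, Real.negMulLog (‖M' k q‖ ^ 2) +
      Real.negMulLog (‖M' l q‖ ^ 2) ≤
      Real.negMulLog (‖M k q‖ ^ 2) + Real.negMulLog (‖M l q‖ ^ 2) +
        (‖M k q‖ ^ 2 + ‖M l q‖ ^ 2) * Real.log 2 := by
    intro q
    exact negMulLog_pair_key (by positivity) (by positivity) (by positivity) (by positivity)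
      (hcol q)
  -- rows other than k, l unchanged
  have hrow_eq : ∀ p : Fin n, p ≠ k → p ≠ l →
      (∑ q, Real.negMulLog (‖M' p q‖ ^ 2)) =
        ∑ q, Real.negMulLog (‖M p q‖ ^ 2) := by
    intro p hpk hpl
    refine Finset.sum_congr rfl fun q _ => ?_
    rw [hM']
    simp [hpk, hpl]
  -- split sums over rows
  have hsplit : ∀ (h : Fin n → ℝ), ∑ p, h p =
      h k + h l + ∑ p ∈ Finset.univ \ {k, l}, h p := by
    intro h
    rw [← Finset.sum_sdiff (Finset.subset_univ ({k, l} : Finset (Fin n))),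
      Finset.sum_pair hkl']
    ring
  have hmain : (∑ p, ∑ q, Real.negMulLog (‖M' p q‖ ^ 2)) ≤
      (∑ p, ∑ q, Real.negMulLog (‖M p q‖ ^ 2)) + 2 * Real.log 2 := by
    rw [hsplit (fun p => ∑ q, Real.negMulLog (‖M' p q‖ ^ 2)),
        hsplit (fun p => ∑ q, Real.negMulLog (‖M p q‖ ^ 2))]
    have htail : (∑ p ∈ Finset.univ \ {k, l}, ∑ q, Real.negMulLog (‖M' p q‖ ^ 2)) =
        ∑ p ∈ Finset.univ \ {k, l}, ∑ q, Real.negMulLog (‖M p q‖ ^ 2) := by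
      refine Finset.sum_congr rfl fun p hp => ?_
      simp only [Finset.mem_sdiff, Finset.mem_insert, Finset.mem_singleton] at hp
      exact hrow_eq p (fun h => hp.2 (Or.inl h)) (fun h => hp.2 (Or.inr h))
    rw [htail]
    have hB : (∑ q, Real.negMulLog (‖M' k q‖ ^ 2)) +
        (∑ q, Real.negMulLog (‖M' l q‖ ^ 2)) ≤
        (∑ q, Real.negMulLog (‖M k q‖ ^ 2)) +
        (∑ q, Real.negMulLog (‖M l q‖ ^ 2)) + 2 * Real.log 2 := by
      have hle : (∑ q, (Real.negMulLog (‖M' k q‖ ^ 2) +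
          Real.negMulLog (‖M' l q‖ ^ 2))) ≤
          ∑ q, (Real.negMulLog (‖M k q‖ ^ 2) +
            Real.negMulLog (‖M l q‖ ^ 2) +
            (‖M k q‖ ^ 2 + ‖M l q‖ ^ 2) * Real.log 2) :=
        Finset.sum_le_sum fun q _ => hcolE q
      rw [Finset.sum_add_distrib] at hle
      rw [Finset.sum_add_distrib, Finset.sum_add_distrib] at hle
      rw [← Finset.sum_mul, Finset.sum_add_distrib] at hle
      have hbound : ((∑ q, ‖M k q‖ ^ 2) + ∑ q, ‖M l q‖ ^ 2) *
          Real.log 2 ≤ 2 * Real.log 2 := by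
        apply mul_le_mul_of_nonneg_right _ hlog2.le
        linarith
      linarith
    linarith
  -- conclude
  have h1 := hrw M
  have h2 := hrw M'
  have : matrixEntropy M' * Real.log 2 ≤ (matrixEntropy M + 2) * Real.log 2 := by
    rw [h2, add_mul, h1]
    linarith
  exact le_of_mul_le_mul_right this hlog2
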